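/- Let B be a complex symmetric n×n matrix with positive definite imaginary part, and let S = [[S_pp, S_pq],[S_qp, S_qq]] ∈ Sp(2n,ℂ) (n×n block form) be such that S·L_B is a positive Lagrangian subspace. Then the matrix S_qp B + S_qq is invertible, and S·L_B = L_{B'} where B' := (S_pp B + S_pq)(S_qp B + S_qq)⁻¹; in particular B' is symmetric with positive definite imaginary part. -/

import Mathlib

open Matrix

noncomputable section

/-- The standard symplectic matrix `Ω = [[0, −I],[I, 0]]` on `ℝ²ⁿ`. -/
def Omg (n : ℕ) : Matrix (Fin n ⊕ Fin n) (Fin n ⊕ Fin n) ℝ :=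
  fromBlocks 0 (-1) 1 0

/-- The complexification of `Ω`. -/
def OmgC (n : ℕ) : Matrix (Fin n ⊕ Fin n) (Fin n ⊕ Fin n) ℂ :=
  (Omg n).map Complex.ofReal

/-- Componentwise imaginary part of a complex matrix. -/
def matIm {m k : Type*} (A : Matrix m k ℂ) : Matrix m k ℝ := A.map Complex.im

/-- The hermitian form `h(z,z) = (i/2) z·Ω z̄` measuring positivity of Lagrangian
subspaces (the bar is componentwise complex conjugation). -/
def posform {n : ℕ} (z : Fin n ⊕ Fin n → ℂ) : ℂ :=
  (Complex.I / 2) * (z ⬝ᵥ OmgC n *ᵥ star z)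

/-- The subset `L_B = {(Bq, q) : q ∈ ℂⁿ}` of `ℂⁿ×ℂⁿ`. -/
def LBset {n : ℕ} (B : Matrix (Fin n) (Fin n) ℂ) : Set (Fin n ⊕ Fin n → ℂ) :=
  {z | ∃ q : Fin n → ℂ, z = Sum.elim (B *ᵥ q) q}

lemma omgC_eq (n : ℕ) : OmgC n = fromBlocks 0 (-1) 1 0 := by
  unfold OmgC Omg
  ext (i | i) (j | j) <;>
    simp [Matrix.map_apply, fromBlocks, Matrix.one_apply, apply_ite Complex.ofReal]

lemma dot_omg {n : ℕ} (p q p' q' : Fin n → ℂ) :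
    Sum.elim p q ⬝ᵥ OmgC n *ᵥ Sum.elim p' q' = q ⬝ᵥ p' - p ⬝ᵥ q' := by
  rw [omgC_eq, fromBlocks_mulVec]
  simp only [Sum.elim_comp_inl, Sum.elim_comp_inr, Matrix.zero_mulVec, Matrix.one_mulVec,
    Matrix.neg_mulVec, Matrix.one_mulVec, zero_add, add_zero]
  rw [sumElim_dotProduct_sumElim]
  simp [dotProduct_neg]
  ring

lemma star_sum_elim {n : ℕ} (p q : Fin n → ℂ) :
    star (Sum.elim p q) = Sum.elim (star p) (star q) := by
  funext i; cases i <;> rfl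

lemma key2 {n : ℕ} (w : Fin n → ℂ) (v : Fin n → ℝ) :
    (Complex.I / 2) * ((fun i => (v i : ℂ)) ⬝ᵥ star w - w ⬝ᵥ (fun i => (v i : ℂ))) =
      ∑ i, (v i : ℂ) * ((w i).im : ℂ) := by
  simp only [dotProduct, Pi.star_apply, Complex.star_def, ← Finset.sum_sub_distrib, Finset.mul_sum]
  refine Finset.sum_congr rfl fun i _ => ?_
  have h1 := Complex.sub_conj (w i)
  have h2 := Complex.I_sq
  push_cast at h1 ⊢
  linear_combination (-(v i : ℂ) * Complex.I / 2) * h1 +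
    (-(v i : ℂ) * ((w i).im : ℂ)) * h2

/-- Let `B` be complex symmetric with `Im B` positive definite and
let `S = [[S_pp,S_pq],[S_qp,S_qq]] ∈ Sp(2n,ℂ)` be such that `S·L_B` is a positive
Lagrangian subspace. Then `S_qp B + S_qq` is invertible and `S·L_B = L_{B'}` with
`B' := (S_pp B + S_pq)(S_qp B + S_qq)⁻¹`; in particular `B'` is symmetric with
positive definite imaginary part. -/
theorem statement11 (n : ℕ) (B : Matrix (Fin n) (Fin n) ℂ)
    (hBsymm : Bᵀ = B) (hBim : (matIm B).PosDef)
    (S : Matrix (Fin n ⊕ Fin n) (Fin n ⊕ Fin n) ℂ)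
    (hSsymp : Sᵀ * OmgC n * S = OmgC n)
    (hSLLag : ∀ x x' : Fin n → ℂ,
      (S *ᵥ Sum.elim (B *ᵥ x) x) ⬝ᵥ OmgC n *ᵥ (S *ᵥ Sum.elim (B *ᵥ x') x') = 0)
    (hSLpos : ∀ x : Fin n → ℂ, x ≠ 0 →
      (posform (S *ᵥ Sum.elim (B *ᵥ x) x)).im = 0 ∧
        0 < (posform (S *ᵥ Sum.elim (B *ᵥ x) x)).re) :
    IsUnit (S.toBlocks₂₁ * B + S.toBlocks₂₂) ∧
    {w | ∃ x : Fin n → ℂ, w = S *ᵥ Sum.elim (B *ᵥ x) x} =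
      LBset ((S.toBlocks₁₁ * B + S.toBlocks₁₂) * (S.toBlocks₂₁ * B + S.toBlocks₂₂)⁻¹) ∧
    ((S.toBlocks₁₁ * B + S.toBlocks₁₂) * (S.toBlocks₂₁ * B + S.toBlocks₂₂)⁻¹)ᵀ =
      (S.toBlocks₁₁ * B + S.toBlocks₁₂) * (S.toBlocks₂₁ * B + S.toBlocks₂₂)⁻¹ ∧
    (matIm ((S.toBlocks₁₁ * B + S.toBlocks₁₂) *
      (S.toBlocks₂₁ * B + S.toBlocks₂₂)⁻¹)).PosDef := by
  set A := S.toBlocks₁₁ * B + S.toBlocks₁₂ with hA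
  set C := S.toBlocks₂₁ * B + S.toBlocks₂₂ with hC
  -- block action
  have hS : ∀ x : Fin n → ℂ, S *ᵥ Sum.elim (B *ᵥ x) x = Sum.elim (A *ᵥ x) (C *ᵥ x) := by
    intro x
    conv_lhs => rw [← fromBlocks_toBlocks S]
    rw [fromBlocks_mulVec]
    simp only [Sum.elim_comp_inl, Sum.elim_comp_inr, hA, hC, add_mulVec, mulVec_mulVec]
  -- C invertible
  have hCdet : IsUnit C.det := by
    rw [isUnit_iff_ne_zero]
    intro hdet
    obtain ⟨v, hv, hCv⟩ := Matrix.exists_mulVec_eq_zero_iff.2 hdet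
    have hp := (hSLpos v hv).2
    rw [show posform (S *ᵥ Sum.elim (B *ᵥ v) v) = 0 by
      unfold posform
      rw [hS, hCv, star_sum_elim, show star (0 : Fin n → ℂ) = 0 from star_zero _,
        dot_omg]
      simp] at hp
    simp at hp
  -- Lagrangian relation
  have hAC : Aᵀ * C = Cᵀ * A := by
    ext i j
    have h := hSLLag (Pi.single i 1) (Pi.single j 1)
    rw [hS, hS, dot_omg] at h
    have h' := sub_eq_zero.mp h
    simp only [mulVec_single, mul_one, MulOpposite.op_one, one_smul, col_apply, dotProduct, mul_apply, transpose_apply] at h' ⊢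
    exact h'.symm
  
  have hCU : IsUnit C := (Matrix.isUnit_iff_isUnit_det C).2 hCdet
  set B' := A * C⁻¹ with hB'
  have hB'C : B' * C = A := by
    rw [hB', mul_assoc, Matrix.nonsing_inv_mul C hCdet, mul_one]
  have hCTdet : IsUnit Cᵀ.det := by rwa [Matrix.det_transpose]
  have hsymm : B'ᵀ = B' := by
    rw [hB', transpose_mul, transpose_nonsing_inv]
    have hAT : Aᵀ = Cᵀ * (A * C⁻¹) := by
      rw [← mul_assoc, ← hAC, mul_assoc, Matrix.mul_nonsing_inv C hCdet, mul_one]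
    rw [hAT, ← mul_assoc, Matrix.nonsing_inv_mul Cᵀ hCTdet, one_mul]
  have hsets : {w | ∃ x : Fin n → ℂ, w = S *ᵥ Sum.elim (B *ᵥ x) x} = LBset B' := by
    ext w
    constructor
    · rintro ⟨x, rfl⟩
      exact ⟨C *ᵥ x, by rw [hS, mulVec_mulVec, hB'C]⟩
    · rintro ⟨q, rfl⟩
      refine ⟨C⁻¹ *ᵥ q, ?_⟩
      rw [hS, mulVec_mulVec, mulVec_mulVec, Matrix.mul_nonsing_inv C hCdet, one_mulVec,
        ← hB']
  have hposf : ∀ v : Fin n → ℝ,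
      posform (Sum.elim (B' *ᵥ (fun i => (v i : ℂ))) (fun i => (v i : ℂ)))
        = ((v ⬝ᵥ matIm B' *ᵥ v : ℝ) : ℂ) := by
    intro v
    have hq : star (fun i => (v i : ℂ)) = fun i => (v i : ℂ) := by
      funext i; exact Complex.conj_ofReal _
    unfold posform
    rw [star_sum_elim, hq, dot_omg, key2]
    rw [dotProduct]
    push_cast
    refine Finset.sum_congr rfl fun i _ => ?_
    simp only [mulVec, dotProduct, matIm, Matrix.map_apply, Complex.im_sum, Complex.mul_im,
      Complex.ofReal_re, Complex.ofReal_im, mul_zero, zero_add]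
  refine ⟨hCU, hsets, hsymm, posDef_iff_dotProduct_mulVec.2 ⟨?_, ?_⟩⟩
  · ext i j
    have h := congrFun (congrFun hsymm j) i
    simp only [transpose_apply] at h
    simp only [conjTranspose_apply, matIm, Matrix.map_apply, star_trivial]
    rw [h]
  · intro v hv
    set q : Fin n → ℂ := fun i => (v i : ℂ) with hqdef
    have hq0 : q ≠ 0 := by
      intro h
      apply hv
      funext i
      have := congrFun h i
      simpa [hqdef] using this
    set x : Fin n → ℂ := C⁻¹ *ᵥ q with hxdef
    have hCx : C *ᵥ x = q := by
      rw [hxdef, mulVec_mulVec, Matrix.mul_nonsing_inv C hCdet, one_mulVec]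
    have hx0 : x ≠ 0 := by
      intro h
      apply hq0
      rw [← hCx, h, mulVec_zero]
    have hAx : A *ᵥ x = B' *ᵥ q := by
      rw [hxdef, mulVec_mulVec, hB']
    have hp := (hSLpos x hx0).2
    rw [show posform (S *ᵥ Sum.elim (B *ᵥ x) x) = ((v ⬝ᵥ matIm B' *ᵥ v : ℝ) : ℂ) by
      rw [hS, hCx, hAx, ← hposf v]] at hp
    rw [Complex.ofReal_re] at hp
    simpa using hp
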